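/- Let $w : \mathbb{C} \to \mathbb{C}$ be a smooth function whose formal power series at $0$ in $z, \bar z$ is $w = \sum_{i+j \ge 1} a_{ij} z^i \bar{z}^j$, and suppose there is a smooth function $g$ with $g(z) z \bar z = w \bar w$ and with $g(0) = |a_{10}|^2 - |a_{01}|^2 > 0$. Then $a_{0,j} = 0$ for all $j \ge 1$, i.e. the formal power series of $w$ is divisible by $z$. -/

import Mathlib

/-- Formal "complex conjugate" of a power series in the two commuting variables
`z = X 0`, `z̄ = X 1`: conjugate all coefficients and interchange the roles of
`z` and `z̄`. -/
noncomputable def mvBar (f : MvPowerSeries (Fin 2) ℂ) : MvPowerSeries (Fin 2) ℂ :=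
  fun d => starRingEnd ℂ (f (Finsupp.equivMapDomain (Equiv.swap (0 : Fin 2) 1) d))

/-- Restriction of a two-variable power series to the `z̄`-axis: the one-variable
power series of coefficients at the monomials `z̄ⁿ`. -/
noncomputable def restrictBarAxis (f : MvPowerSeries (Fin 2) ℂ) : PowerSeries ℂ :=
  PowerSeries.mk fun n => MvPowerSeries.coeff (Finsupp.single (1 : Fin 2) n) f

lemma restrictBarAxis_mul (f g : MvPowerSeries (Fin 2) ℂ) :
    restrictBarAxis (f * g) = restrictBarAxis f * restrictBarAxis g := by
  ext n
  rw [PowerSeries.coeff_mul]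
  simp only [restrictBarAxis, PowerSeries.coeff_mk, MvPowerSeries.coeff_mul,
    Finsupp.antidiagonal_single, Finset.sum_map]
  rfl

lemma restrictBarAxis_X0 : restrictBarAxis (MvPowerSeries.X 0) = 0 := by
  ext n
  simp only [restrictBarAxis, PowerSeries.coeff_mk, MvPowerSeries.coeff_X]
  rw [if_neg]
  · simp
  intro h
  have := DFunLike.congr_fun h (0 : Fin 2)
  simp [Finsupp.single_apply] at this

/-!
STATEMENT 3: Let `w` be the formal power series at `0` of a smooth function, with
`w = ∑_{i+j ≥ 1} a_{ij} zⁱ z̄ʲ` (no constant term), and suppose there is a formal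
series `g` (the Taylor series of a real-valued function, i.e. `mvBar g = g`) with
`g · z · z̄ = w · w̄` and with constant term `g(0) = |a₁₀|² - |a₀₁|² > 0`.  Then
`a₀ⱼ = 0` for all `j ≥ 1`, i.e. the formal power series of `w` is divisible by `z`.
-/
theorem stmt3 (w g : MvPowerSeries (Fin 2) ℂ)
    (hw0 : MvPowerSeries.constantCoeff w = 0)
    (hgreal : mvBar g = g)
    (heq : g * MvPowerSeries.X 0 * MvPowerSeries.X 1 = w * mvBar w)
    (a10 a01 : ℂ)
    (ha10 : a10 = MvPowerSeries.coeff (Finsupp.single (0 : Fin 2) 1) w)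
    (ha01 : a01 = MvPowerSeries.coeff (Finsupp.single (1 : Fin 2) 1) w)
    (hg0 : MvPowerSeries.coeff 0 g = ((Complex.normSq a10 - Complex.normSq a01 : ℝ) : ℂ))
    (hpos : Complex.normSq a01 < Complex.normSq a10) :
    ∀ j : ℕ, 1 ≤ j → MvPowerSeries.coeff (Finsupp.single (1 : Fin 2) j) w = 0 := by
  have hprod : restrictBarAxis w * restrictBarAxis (mvBar w) = 0 := by
    rw [← restrictBarAxis_mul, ← heq, restrictBarAxis_mul, restrictBarAxis_mul,
      restrictBarAxis_X0, mul_zero, zero_mul]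
  rcases mul_eq_zero.mp hprod with h | h
  · intro j _
    have := congrArg (PowerSeries.coeff j) h
    simpa [restrictBarAxis] using this
  · exfalso
    have h1 := congrArg (PowerSeries.coeff 1) h
    simp only [restrictBarAxis, PowerSeries.coeff_mk, map_zero] at h1
    have hswap : Finsupp.equivMapDomain (Equiv.swap (0 : Fin 2) 1)
        (Finsupp.single (1 : Fin 2) 1) = Finsupp.single (0 : Fin 2) 1 := by
      rw [Finsupp.equivMapDomain_single, Equiv.swap_apply_right]
    have : a10 = 0 := by
      have : starRingEnd ℂ (MvPowerSeries.coeff (Finsupp.single (0 : Fin 2) 1) w) = 0 := by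
        rw [← hswap]; exact h1
      rw [ha10]
      exact (starRingEnd ℂ).injective (by simpa using this)
    rw [this] at hpos
    simp at hpos
    exact absurd hpos (not_lt.mpr (Complex.normSq_nonneg a01))
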